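/- Chain rule of conditional relative entropy: let T : E → F be measurable between standard Borel spaces and let μ, π be probability measures on E with μ ≪ π. Then Ent(μ | π) = Ent(T♯μ | T♯π) + ∫_F Ent(μ(· | T = t) | π(· | T = t)) d(T♯μ)(t), where μ(· | T = t) and π(· | T = t) denote regular conditional distributions given T. -/

import Mathlib

open MeasureTheory ProbabilityTheory
open scoped ENNReal

/-- Relative entropy `Ent(η | μ) = ∫ ln (dη/dμ) dη`. -/
noncomputable def Ent {E : Type*} [MeasurableSpace E] (η μ : Measure E) : ℝ :=
  ∫ x, Real.log ((η.rnDeriv μ) x).toReal ∂η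

section Aux

variable {E F : Type*} [MeasurableSpace E] [StandardBorelSpace E] [Nonempty E] [MeasurableSpace F]
  {T : E → F}

lemma map_graph_eq (hT : Measurable T) (μ : Measure E) [IsProbabilityMeasure μ] :
    μ.map (fun x => (T x, x)) = (μ.map T) ⊗ₘ condDistrib id T μ := by
  have h1 : (μ.map (fun x => (T x, x))).fst = μ.map T := Measure.fst_map_prodMk measurable_id
  rw [condDistrib]
  simp only [id_eq]
  conv_lhs => rw [← Measure.disintegrate (μ.map (fun x => (T x, x))) (μ.map (fun x => (T x, x))).condKernel]
  rw [h1]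

lemma ae_ac (hT : Measurable T) (μ π : Measure E) [IsProbabilityMeasure μ]
    [IsProbabilityMeasure π] (hac : μ ≪ π) :
    ∀ᵐ t ∂(μ.map T), condDistrib id T μ t ≪ condDistrib id T π t := by
  set κ := condDistrib id T μ with hκdef
  set η := condDistrib id T π with hηdef
  haveI : IsProbabilityMeasure (μ.map T) := Measure.isProbabilityMeasure_map hT.aemeasurable
  haveI : IsProbabilityMeasure (π.map T) := Measure.isProbabilityMeasure_map hT.aemeasurable
  set M := Kernel.mutuallySingularSet κ η with hM
  have hMm : MeasurableSet M := Kernel.measurableSet_mutuallySingularSet κ η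
  have he : Measurable fun x => (T x, x) := hT.prodMk measurable_id
  have hπM : π ((fun x => (T x, x)) ⁻¹' M) = 0 := by
    rw [← Measure.map_apply he hMm, map_graph_eq hT π, Measure.compProd_apply hMm]
    have : ∀ t, η t (Prod.mk t ⁻¹' M) = 0 := fun t =>
      Kernel.measure_mutuallySingularSetSlice κ η t
    simp [← hηdef, this]
  have hμM : μ ((fun x => (T x, x)) ⁻¹' M) = 0 := hac hπM
  rw [← Measure.map_apply he hMm, map_graph_eq hT μ, Measure.compProd_apply hMm] at hμM
  have hmeas : Measurable fun t => κ t (Prod.mk t ⁻¹' M) :=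
    Kernel.measurable_kernel_prodMk_left hMm
  rw [lintegral_eq_zero_iff hmeas] at hμM
  filter_upwards [hμM] with t ht
  refine (Kernel.singularPart_eq_zero_iff_absolutelyContinuous κ η t).mp ?_
  rw [Kernel.singularPart_eq_zero_iff_measure_eq_zero]
  exact ht

lemma rnDeriv_factor (hT : Measurable T) (μ π : Measure E) [IsProbabilityMeasure μ]
    [IsProbabilityMeasure π] (hac : μ ≪ π) :
    μ.rnDeriv π =ᵐ[π] fun x =>
      (μ.map T).rnDeriv (π.map T) (T x)
        * Kernel.rnDeriv (condDistrib id T μ) (condDistrib id T π) (T x) x := by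
  set κ := condDistrib id T μ with hκdef
  set η := condDistrib id T π with hηdef
  haveI : IsProbabilityMeasure (μ.map T) := Measure.isProbabilityMeasure_map hT.aemeasurable
  haveI : IsProbabilityMeasure (π.map T) := Measure.isProbabilityMeasure_map hT.aemeasurable
  set f : F → ℝ≥0∞ := (μ.map T).rnDeriv (π.map T) with hfdef
  have hf : Measurable f := Measure.measurable_rnDeriv _ _
  have hr : Measurable fun p : F × E => Kernel.rnDeriv κ η p.1 p.2 :=
    Kernel.measurable_rnDeriv κ η
  have he : Measurable fun x => (T x, x) := hT.prodMk measurable_id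
  have hg : Measurable fun x => f (T x) * Kernel.rnDeriv κ η (T x) x :=
    ((hf.comp hT).mul (hr.comp he))
  have hacT : μ.map T ≪ π.map T := hac.map hT
  have key : π.withDensity (fun x => f (T x) * Kernel.rnDeriv κ η (T x) x) = μ := by
    ext s hs
    rw [withDensity_apply _ hs]
    have h1 : ∫⁻ x in s, f (T x) * Kernel.rnDeriv κ η (T x) x ∂π
        = ∫⁻ x, (fun p : F × E => f p.1
            * Set.indicator (Prod.snd ⁻¹' s) (fun q : F × E => Kernel.rnDeriv κ η q.1 q.2) p)
            ((fun x => (T x, x)) x) ∂π := by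
      rw [← lintegral_indicator hs]
      congr 1
      funext x
      by_cases hx : x ∈ s
      · simp [Set.indicator_of_mem, hx, Set.indicator_of_mem (show (T x, x) ∈ Prod.snd ⁻¹' s from hx)]
      · simp [Set.indicator_of_notMem, hx,
          Set.indicator_of_notMem (show (T x, x) ∉ Prod.snd ⁻¹' s from hx)]
    have hψ : Measurable fun p : F × E => f p.1
        * Set.indicator (Prod.snd ⁻¹' s) (fun q : F × E => Kernel.rnDeriv κ η q.1 q.2) p :=
      (hf.comp measurable_fst).mul (hr.indicator (measurable_snd hs))
    rw [h1, ← lintegral_map hψ he, map_graph_eq hT π, Measure.lintegral_compProd hψ]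
    have h2 : ∀ t, ∫⁻ y, f t
        * Set.indicator (Prod.snd ⁻¹' s) (fun q : F × E => Kernel.rnDeriv κ η q.1 q.2) (t, y) ∂η t
        = f t * ∫⁻ y in s, Kernel.rnDeriv κ η t y ∂η t := by
      intro t
      rw [lintegral_const_mul _ (show Measurable fun y : E =>
        Set.indicator (Prod.snd ⁻¹' s) (fun q : F × E => Kernel.rnDeriv κ η q.1 q.2) (t, y) from
        (hr.indicator (measurable_snd hs)).comp measurable_prodMk_left)]
      congr 1
      rw [← lintegral_indicator hs]
      exact lintegral_congr fun y => by by_cases hy : y ∈ s <;> simp [Set.indicator, hy]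
    simp_rw [← hηdef, h2]
    have hG : Measurable fun t => ∫⁻ y in s, Kernel.rnDeriv κ η t y ∂η t :=
      Measurable.setLIntegral_kernel_prod_right hr hs
    have hwd : ∫⁻ t, f t * (∫⁻ y in s, Kernel.rnDeriv κ η t y ∂η t) ∂(π.map T)
        = ∫⁻ t, (∫⁻ y in s, Kernel.rnDeriv κ η t y ∂η t) ∂((π.map T).withDensity f) :=
      (lintegral_withDensity_eq_lintegral_mul _ hf hG).symm
    rw [hwd, Measure.withDensity_rnDeriv_eq _ _ hacT]
    have h3 : ∀ᵐ t ∂(μ.map T), ∫⁻ y in s, Kernel.rnDeriv κ η t y ∂η t = κ t s := by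
      filter_upwards [ae_ac hT μ π hac] with t ht
      have hae : (fun y => Kernel.rnDeriv κ η t y) =ᵐ[(η t).restrict s]
          (κ t).rnDeriv (η t) :=
        ae_restrict_of_ae (Kernel.rnDeriv_eq_rnDeriv_measure)
      rw [lintegral_congr_ae hae, Measure.setLIntegral_rnDeriv ht s]
    rw [lintegral_congr_ae h3]
    have h4 : ∫⁻ t, κ t s ∂(μ.map T) = ((μ.map T) ⊗ₘ κ) (Prod.snd ⁻¹' s) := by
      rw [Measure.compProd_apply (measurable_snd hs)]
      rfl
    rw [h4, ← map_graph_eq hT μ, Measure.map_apply he (measurable_snd hs)]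
    rfl
  have := Measure.rnDeriv_withDensity π hg
  rw [key] at this
  exact this

end Aux

theorem chain_rule_conditional_entropy {E F : Type*}
    [MeasurableSpace E] [StandardBorelSpace E] [Nonempty E] [MeasurableSpace F]
    (T : E → F) (hT : Measurable T)
    (μ π : Measure E) [IsProbabilityMeasure μ] [IsProbabilityMeasure π]
    (hac : μ ≪ π)
    (h1 : Integrable (fun x => Real.log ((μ.rnDeriv π) x).toReal) μ)
    (h2 : Integrable (fun x => Real.log (((μ.map T).rnDeriv (π.map T)) x).toReal) (μ.map T))
    (h3 : Integrable
      (fun t => Ent ((condDistrib id T μ) t) ((condDistrib id T π) t)) (μ.map T)) :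
    Ent μ π = Ent (μ.map T) (π.map T)
      + ∫ t, Ent ((condDistrib id T μ) t) ((condDistrib id T π) t) ∂(μ.map T) := by
  classical
  set κ := condDistrib id T μ with hκdef
  set η := condDistrib id T π with hηdef
  haveI : IsProbabilityMeasure (μ.map T) := Measure.isProbabilityMeasure_map hT.aemeasurable
  haveI : IsProbabilityMeasure (π.map T) := Measure.isProbabilityMeasure_map hT.aemeasurable
  set f : F → ℝ≥0∞ := (μ.map T).rnDeriv (π.map T) with hfdef
  have hf : Measurable f := Measure.measurable_rnDeriv _ _
  have hr : Measurable fun p : F × E => Kernel.rnDeriv κ η p.1 p.2 :=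
    Kernel.measurable_rnDeriv κ η
  have he : Measurable fun x => (T x, x) := hT.prodMk measurable_id
  have hacT : μ.map T ≪ π.map T := hac.map hT
  -- a.e. facts about f ∘ T
  have hfT : ∀ᵐ x ∂μ, 0 < f (T x) ∧ f (T x) ≠ ∞ :=
    ae_of_ae_map hT.aemeasurable
      ((Measure.rnDeriv_pos hacT).and
        (hacT.ae_le (Measure.rnDeriv_ne_top (μ.map T) (π.map T))))
  -- a.e. absolute continuity of conditional distributions
  have haeac : ∀ᵐ t ∂(μ.map T), κ t ≪ η t := ae_ac hT μ π hac
  -- a.e. positivity and finiteness of the kernel Radon-Nikodym derivative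
  have hrT : ∀ᵐ x ∂μ, 0 < Kernel.rnDeriv κ η (T x) x ∧ Kernel.rnDeriv κ η (T x) x ≠ ∞ := by
    set B : Set (F × E) := {p | ¬ (0 < Kernel.rnDeriv κ η p.1 p.2 ∧ Kernel.rnDeriv κ η p.1 p.2 ≠ ∞)}
      with hBdef
    have hBm : MeasurableSet B := by
      have : MeasurableSet {p : F × E | 0 < Kernel.rnDeriv κ η p.1 p.2 ∧
          Kernel.rnDeriv κ η p.1 p.2 ≠ ∞} :=
        (measurableSet_lt measurable_const hr).inter
          ((hr (measurableSet_singleton ∞)).compl)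
      exact this.compl
    have hBslice : ∀ᵐ t ∂(μ.map T), κ t (Prod.mk t ⁻¹' B) = 0 := by
      filter_upwards [haeac] with t ht
      have h0 : ∀ᵐ y ∂κ t, 0 < Kernel.rnDeriv κ η t y := Kernel.rnDeriv_pos ht
      have h1 : ∀ᵐ y ∂κ t, Kernel.rnDeriv κ η t y ≠ ∞ := ht.ae_le (Kernel.rnDeriv_ne_top κ η)
      refine measure_eq_zero_iff_ae_notMem.mpr ?_
      filter_upwards [h0, h1] with y hy1 hy2
      simp only [hBdef, Set.mem_preimage, Set.mem_setOf_eq, not_not]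
      exact ⟨hy1, hy2⟩
    have hμB : μ ((fun x => (T x, x)) ⁻¹' B) = 0 := by
      rw [← Measure.map_apply he hBm, map_graph_eq hT μ, Measure.compProd_apply hBm,
        lintegral_eq_zero_iff (Kernel.measurable_kernel_prodMk_left hBm)]
      exact hBslice
    filter_upwards [measure_eq_zero_iff_ae_notMem.mp hμB] with x hx
    simp only [hBdef, Set.mem_preimage, Set.mem_setOf_eq, not_not] at hx
    exact hx
  -- factorization pulled back to μ
  have hgμ : (fun x => (μ.rnDeriv π) x) =ᵐ[μ]
      fun x => f (T x) * Kernel.rnDeriv κ η (T x) x := hac.ae_le (rnDeriv_factor hT μ π hac)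
  -- log splits
  have hlog : (fun x => Real.log ((μ.rnDeriv π) x).toReal) =ᵐ[μ]
      fun x => Real.log ((f (T x)).toReal) + Real.log ((Kernel.rnDeriv κ η (T x) x).toReal) := by
    filter_upwards [hgμ, hfT, hrT] with x hgx hfx hrx
    rw [hgx, ENNReal.toReal_mul, Real.log_mul]
    · exact (ENNReal.toReal_pos hfx.1.ne' hfx.2).ne'
    · exact (ENNReal.toReal_pos hrx.1.ne' hrx.2).ne'
  -- integrability
  have hfmeas : AEStronglyMeasurable (fun t => Real.log (f t).toReal) (μ.map T) :=
    (Real.measurable_log.comp hf.ennreal_toReal).aestronglyMeasurable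
  have I1 : Integrable (fun x => Real.log ((f (T x)).toReal)) μ :=
    (integrable_map_measure hfmeas hT.aemeasurable).mp h2
  have Iφ : Integrable (fun x => Real.log ((f (T x)).toReal)
      + Real.log ((Kernel.rnDeriv κ η (T x) x).toReal)) μ := h1.congr hlog
  have I2 : Integrable (fun x => Real.log ((Kernel.rnDeriv κ η (T x) x).toReal)) μ := by
    refine (Iφ.sub I1).congr (Filter.Eventually.of_forall fun x => ?_)
    simp only [Pi.sub_apply]
    ring
  -- main computation
  have hsplit : Ent μ π = ∫ x, Real.log ((f (T x)).toReal) ∂μ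
      + ∫ x, Real.log ((Kernel.rnDeriv κ η (T x) x).toReal) ∂μ := by
    rw [Ent, integral_congr_ae hlog, integral_add I1 I2]
  have hEnt1 : ∫ x, Real.log ((f (T x)).toReal) ∂μ = Ent (μ.map T) (π.map T) := by
    rw [Ent, integral_map hT.aemeasurable hfmeas]
  have hrmeas : AEStronglyMeasurable
      (fun p : F × E => Real.log ((Kernel.rnDeriv κ η p.1 p.2).toReal))
      (μ.map (fun x => (T x, x))) :=
    (Real.measurable_log.comp hr.ennreal_toReal).aestronglyMeasurable
  have Icomp : Integrable (fun p : F × E => Real.log ((Kernel.rnDeriv κ η p.1 p.2).toReal))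
      ((μ.map T) ⊗ₘ κ) := by
    rw [← map_graph_eq hT μ]
    exact (integrable_map_measure hrmeas he.aemeasurable).mpr I2
  have hEnt2 : ∫ x, Real.log ((Kernel.rnDeriv κ η (T x) x).toReal) ∂μ
      = ∫ t, Ent (κ t) (η t) ∂(μ.map T) := by
    rw [← integral_map he.aemeasurable hrmeas, map_graph_eq hT μ,
      Measure.integral_compProd Icomp]
    refine integral_congr_ae ?_
    filter_upwards [haeac] with t ht
    rw [Ent]
    refine integral_congr_ae ?_
    filter_upwards [ht.ae_le (Kernel.rnDeriv_eq_rnDeriv_measure (κ := κ) (η := η) (a := t))]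
      with y hy
    rw [hy]
  rw [hsplit, hEnt1, hEnt2]
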